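/- arXiv:2510.06485 — 4 statements merged into one kernel-verified Lean document; each statement's English description precedes it below -/
import Mathlib

section
/- Let s ≥ 2, let T = {x ∈ ℤ : x ≥ 2, s ∤ x}, and for x ∈ T let n(x) be the unique natural number with s^{n(x)−1} < x < s^{n(x)}, and set 1_{(x)} = 1_{(n(x),x)}. Then the functions {1_{(x)}}_{x∈T} are ℤ-linearly independent: if a finitely supported family of integers (f_x)_{x∈T} satisfies ∑_{x∈T} f_x · 1_{(x)} = 0 as a function on ℤ_s, then f_x = 0 for all x ∈ T. -/
open scoped Classical

instance (m : ℕ) : TopologicalSpace (ZMod m) := ⊥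

/-- The ring of `s`-adic integers, realized as the projective limit of `ZMod (s^n)`. -/
def ZSsub (s : ℕ) : Subring (∀ n : ℕ, ZMod (s ^ n)) where
  carrier := {f | ∀ n, ZMod.castHom (pow_dvd_pow s n.le_succ) (ZMod (s ^ n)) (f (n + 1)) = f n}
  mul_mem' := by intro a b ha hb n; simp only [Pi.mul_apply, map_mul]; rw [ha n, hb n]
  one_mem' := by intro n; simp only [Pi.one_apply]; exact map_one _
  add_mem' := by intro a b ha hb n; simp only [Pi.add_apply, map_add]; rw [ha n, hb n]
  zero_mem' := by intro n; simp only [Pi.zero_apply]; exact map_zero _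
  neg_mem' := by intro a ha n; simp only [Pi.neg_apply, map_neg]; rw [ha n]

abbrev ZS (s : ℕ) : Type := ZSsub s

/-- The characteristic function `1_{(n,x)}` of `{z : s^n ∣ z - x}` in `ℤ_s`. -/
noncomputable def ZS.indicator (s n : ℕ) (x : ℤ) (z : ZS s) : ℤ :=
  if ((s : ZS s)) ^ n ∣ (z - (x : ZS s)) then 1 else 0

lemma zs_dvd_iff (s n : ℕ) (hs : 2 ≤ s) (a : ℤ) :
    ((s : ZS s)) ^ n ∣ (a : ZS s) ↔ (s : ℤ) ^ n ∣ a := by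
  haveI : NeZero (s ^ n) := ⟨pow_ne_zero n (by omega)⟩
  constructor
  · rintro ⟨u, hu⟩
    have h := congrArg (fun w : ZS s => (w : ∀ m, ZMod (s ^ m)) n) hu
    simp only [SubringClass.coe_intCast, MulMemClass.coe_mul, SubmonoidClass.coe_pow,
      SubringClass.coe_natCast, Pi.intCast_apply, Pi.mul_apply, Pi.pow_apply,
      Pi.natCast_apply] at h
    have hz : ((s : ZMod (s ^ n))) ^ n = 0 := by
      rw [← Nat.cast_pow, ZMod.natCast_self]
    rw [hz, zero_mul] at h
    have := (ZMod.intCast_zmod_eq_zero_iff_dvd a (s ^ n)).mp h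
    exact_mod_cast this
  · rintro ⟨b, rfl⟩
    exact ⟨(b : ZS s), by push_cast; ring⟩

/-- For `x ≥ 2` with `s ∤ x`, `n(x) = Nat.log s x + 1` is the unique `n` with
`s^(n-1) < x < s^n`, and `1_{(x)} = 1_{(n(x),x)}`. The family `{1_{(x)}}_{x ∈ T}`,
`T = {x ≥ 2 : s ∤ x}`, is ℤ-linearly independent. -/
theorem stmt5 (s : ℕ) (hs : 2 ≤ s) (f : ℕ →₀ ℤ)
    (hT : ∀ x ∈ f.support, 2 ≤ x ∧ ¬ s ∣ x)
    (hsum : ∀ z : ZS s,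
      ∑ x ∈ f.support, f x * ZS.indicator s (Nat.log s x + 1) (x : ℤ) z = 0) :
    f = 0 := by
  by_contra hf
  have hne : f.support.Nonempty := Finsupp.support_nonempty_iff.mpr hf
  set x₀ := f.support.min' hne with hx₀
  have hx₀mem : x₀ ∈ f.support := f.support.min'_mem hne
  have hz := hsum ((x₀ : ℤ) : ZS s)
  rw [Finset.sum_eq_single x₀ ?_ (fun h => absurd hx₀mem h)] at hz
  · rw [ZS.indicator, if_pos (by simp)] at hz
    exact Finsupp.mem_support_iff.mp hx₀mem (by linarith)
  · intro x hx hxne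
    have hlt : x₀ < x := lt_of_le_of_ne (f.support.min'_le x hx) (Ne.symm hxne)
    rw [ZS.indicator, if_neg, mul_zero]
    rw [show (((x₀:ℤ) : ZS s)) - (((x:ℤ)) : ZS s) = (((x₀ : ℤ) - x : ℤ) : ZS s) by
      push_cast; ring]
    rw [zs_dvd_iff s _ hs]
    intro hd
    have hpos : (0 : ℤ) < (x : ℤ) - (x₀ : ℤ) := by omega
    have hd' := dvd_neg.mpr hd
    rw [neg_sub] at hd'
    have hle := Int.le_of_dvd hpos hd' 
    have hxlt : (x : ℤ) < (s : ℤ) ^ (Nat.log s x + 1) := by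
      exact_mod_cast Nat.lt_pow_succ_log_self (by omega) x
    omega
end

section
/- Let s ≥ 2 and T = {x ∈ ℤ : x ≥ 2, s ∤ x}. Every locally constant function f : ℤ_s^× → ℤ vanishing at 1 (i.e., every continuous ℤ-valued function on ℤ_s^× with f(1) = 0) is a finite ℤ-linear combination of the functions 1_{(x)} for x ∈ T. -/
open scoped Classical

instance (m : ℕ) : DiscreteTopology (ZMod m) := ⟨rfl⟩

namespace ZSaux
variable {s : ℕ}

lemma coe_natCast (k m : ℕ) : ((k : ZS s) : ∀ n, ZMod (s ^ n)) m = (k : ZMod (s ^ m)) := by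
  rw [SubringClass.coe_natCast]; rfl

lemma coe_intCast (k : ℤ) (m : ℕ) : ((k : ZS s) : ∀ n, ZMod (s ^ n)) m = (k : ZMod (s ^ m)) := by
  rw [SubringClass.coe_intCast]; rfl

lemma mem_step (z : ZS s) (n : ℕ) :
    ZMod.castHom (pow_dvd_pow s n.le_succ) (ZMod (s ^ n)) (z.1 (n + 1)) = z.1 n := z.2 n

lemma natCast_mod_dvd {n M : ℕ} (a : ℕ) (h : n ∣ M) : ((a % M : ℕ) : ZMod n) = (a : ZMod n) := by
  conv_rhs => rw [← Nat.div_add_mod a M]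
  obtain ⟨c, rfl⟩ := h
  push_cast
  simp [ZMod.natCast_self]

lemma coord_cast (hs : 2 ≤ s) (z : ZS s) (n k : ℕ) :
    (((z.1 (n + k)).val : ℕ) : ZMod (s ^ n)) = z.1 n := by
  haveI : ∀ m : ℕ, NeZero (s ^ m) := fun m => ⟨pow_ne_zero _ (by omega)⟩
  induction k with
  | zero => rw [ZMod.natCast_val, ZMod.cast_id]; rfl
  | succ k ih =>
      have h1 : (((z.1 (n + k + 1)).val : ℕ) : ZMod (s ^ (n + k))) = z.1 (n + k) := by
        rw [ZMod.natCast_val, ← ZMod.castHom_apply (h := pow_dvd_pow s (n+k).le_succ)]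
        exact mem_step z (n + k)
      have h2 : (z.1 (n + k)).val = (z.1 (n + k + 1)).val % s ^ (n + k) := by
        rw [← h1, ZMod.val_natCast]
      rw [← ih, h2, natCast_mod_dvd _ (pow_dvd_pow s (Nat.le_add_right n k))]; rfl

lemma coord_le (hs : 2 ≤ s) (z : ZS s) {n m : ℕ} (h : n ≤ m) :
    (((z.1 m).val : ℕ) : ZMod (s ^ n)) = z.1 n := by
  obtain ⟨k, rfl⟩ := Nat.exists_eq_add_of_le h
  exact coord_cast hs z n k

lemma pow_dvd_iff (hs : 2 ≤ s) (w : ZS s) (n : ℕ) :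
    (s : ZS s) ^ n ∣ w ↔ w.1 n = 0 := by
  haveI : ∀ m : ℕ, NeZero (s ^ m) := fun m => ⟨pow_ne_zero _ (by omega)⟩
  have hsn : ∀ m : ℕ, (((s : ZS s) ^ n : ZS s) : ∀ i, ZMod (s ^ i)) m
      = ((s ^ n : ℕ) : ZMod (s ^ m)) := by
    intro m
    rw [SubmonoidClass.coe_pow, Pi.pow_apply, coe_natCast, Nat.cast_pow]
  constructor
  · rintro ⟨q, rfl⟩
    show (((s : ZS s) ^ n * q : ZS s) : ∀ m, ZMod (s ^ m)) n = 0
    have : (((s : ZS s) ^ n * q : ZS s) : ∀ m, ZMod (s ^ m)) n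
        = ((s : ZS s) ^ n : ∀ m, ZMod (s ^ m)) n * (q : ∀ m, ZMod (s ^ m)) n := rfl
    rw [this, Pi.pow_apply, coe_natCast, ← Nat.cast_pow, ZMod.natCast_self, zero_mul]
  · intro h0
    set a : ℕ → ℕ := fun m => (w.1 m).val with ha
    have hcompat : ∀ m k, a m = a (m + k) % s ^ m := by
      intro m k
      have h1 := congrArg ZMod.val (coord_cast hs w m k)
      rw [ZMod.val_natCast] at h1
      exact h1.symm
    have hdvd : ∀ k, s ^ n ∣ a (n + k) := by
      intro k
      have h1 := coord_cast hs w n k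
      rw [h0] at h1
      exact (ZMod.natCast_eq_zero_iff (a (n + k)) (s ^ n)).1 h1
    refine ⟨⟨fun m => ((a (m + n) / s ^ n : ℕ) : ZMod (s ^ m)), ?_⟩, ?_⟩
    · intro m
      have e1 : a (m + n) = a (m + n + 1) % (s ^ n * s ^ m) := by
        rw [← pow_add, add_comm n m]
        exact hcompat (m + n) 1
      have e2 : a (m + n) / s ^ n = a (m + n + 1) / s ^ n % s ^ m := by
        rw [e1, Nat.mod_mul_right_div_self]
      show ZMod.castHom _ _ ((a (m + 1 + n) / s ^ n : ℕ) : ZMod (s ^ (m + 1))) = _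
      rw [map_natCast]
      have h3 : m + 1 + n = m + n + 1 := by omega
      rw [h3]
      show ((a (m + n + 1) / s ^ n : ℕ) : ZMod (s ^ m)) = ((a (m + n) / s ^ n : ℕ) : ZMod (s ^ m))
      rw [e2, ZMod.natCast_mod]
    · apply Subtype.ext
      funext m
      show (w : ∀ i, ZMod (s ^ i)) m
          = (((s : ZS s) ^ n : ZS s) : ∀ i, ZMod (s ^ i)) m * ((a (m + n) / s ^ n : ℕ) : ZMod (s ^ m))
      have hd : s ^ n ∣ a (m + n) := by have := hdvd m; rwa [Nat.add_comm] at this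
      rw [SubmonoidClass.coe_pow, Pi.pow_apply, coe_natCast, ← Nat.cast_pow, ← Nat.cast_mul,
        Nat.mul_div_cancel' hd]
      exact (coord_cast hs w m n).symm
    

lemma dvd_iff (hs : 2 ≤ s) (w : ZS s) : (s : ZS s) ∣ w ↔ w.1 1 = 0 := by
  have h := pow_dvd_iff hs w 1
  rwa [pow_one] at h

lemma indicator_eq (hs : 2 ≤ s) (n : ℕ) (x : ℤ) (z : ZS s) :
    ZS.indicator s n x z = if z.1 n = (x : ZMod (s ^ n)) then 1 else 0 := by
  unfold ZS.indicator
  refine if_congr ?_ rfl rfl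
  rw [pow_dvd_iff hs]
  have : ((z - (x : ZS s) : ZS s) : ∀ i, ZMod (s ^ i)) n
      = (z : ∀ i, ZMod (s ^ i)) n - (x : ZMod (s ^ n)) := by
    rw [← coe_intCast x n]; rfl
  rw [show ((z - (x : ZS s) : ZS s) : ∀ i, ZMod (s ^ i)) n = _ from this, sub_eq_zero]

lemma continuous_coord (m : ℕ) :
    Continuous fun z : {z : ZS s // ¬ (s : ZS s) ∣ z} => z.1.1 m :=
  ((continuous_apply m).comp continuous_subtype_val).comp continuous_subtype_val

lemma compact_domain (hs : 2 ≤ s) : CompactSpace {z : ZS s // ¬ (s : ZS s) ∣ z} := by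
  haveI : ∀ m : ℕ, NeZero (s ^ m) := fun m => ⟨pow_ne_zero _ (by omega)⟩
  haveI : ∀ m : ℕ, Finite (ZMod (s ^ m)) := fun m => Finite.of_fintype _
  haveI hc : CompactSpace (∀ n, ZMod (s ^ n)) := by infer_instance
  have hcl : IsClosed ((ZSsub s : Set (∀ n, ZMod (s ^ n)))) := by
    have he : (ZSsub s : Set (∀ n, ZMod (s ^ n)))
        = ⋂ n, {f | ZMod.castHom (pow_dvd_pow s n.le_succ) (ZMod (s ^ n)) (f (n + 1)) = f n} := by
      ext g
      simp only [Set.mem_iInter, Set.mem_setOf_eq]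
      rfl
    rw [he]
    exact isClosed_iInter fun n => isClosed_eq
      (Continuous.comp continuous_of_discreteTopology (continuous_apply (n + 1)))
      (continuous_apply n)
  haveI : CompactSpace (ZS s) :=
    isCompact_iff_compactSpace.mp hcl.isCompact
  have hcl2 : IsClosed {z : ZS s | ¬ (s : ZS s) ∣ z} := by
    have he : {z : ZS s | ¬ (s : ZS s) ∣ z} = (fun z : ZS s => z.1 1) ⁻¹' ({0}ᶜ) := by
      ext z
      simp only [Set.mem_setOf_eq, Set.mem_preimage, Set.mem_compl_iff, Set.mem_singleton_iff]
      rw [dvd_iff hs]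
    rw [he]
    exact (IsOpen.isClosed_compl (isOpen_discrete _)).preimage
      ((continuous_apply 1).comp continuous_subtype_val)
  exact isCompact_iff_compactSpace.mp hcl2.isCompact

lemma exists_level (hs : 2 ≤ s) (f : {z : ZS s // ¬ (s : ZS s) ∣ z} → ℤ) (hf : Continuous f) :
    ∃ N : ℕ, 1 ≤ N ∧ ∀ z w : {z : ZS s // ¬ (s : ZS s) ∣ z},
      w.1.1 N = z.1.1 N → f w = f z := by
  haveI : ∀ m : ℕ, NeZero (s ^ m) := fun m => ⟨pow_ne_zero _ (by omega)⟩
  -- pointwise local constancy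
  have step : ∀ z : {z : ZS s // ¬ (s : ZS s) ∣ z}, ∃ N : ℕ,
      ∀ w : {z : ZS s // ¬ (s : ZS s) ∣ z}, w.1.1 N = z.1.1 N → f w = f z := by
    intro z
    have hV : IsOpen (f ⁻¹' {f z}) := hf.isOpen_preimage _ (isOpen_discrete _)
    rw [isOpen_induced_iff] at hV
    obtain ⟨t, ht, htV⟩ := hV
    rw [isOpen_induced_iff] at ht
    obtain ⟨u, hu, hut⟩ := ht
    have hzu : z.1.1 ∈ u := by
      have : z ∈ f ⁻¹' {f z} := rfl
      rw [← htV] at this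
      rw [← hut] at this
      exact this
    obtain ⟨I, uu, hI, hIu⟩ := isOpen_pi_iff.mp hu _ hzu
    refine ⟨I.sup id, fun w hw => ?_⟩
    have hwu : w.1.1 ∈ u := by
      apply hIu
      intro i hi
      have hiN : i ≤ I.sup id := Finset.le_sup (f := id) hi
      have h1 : (((w.1.1 (I.sup id)).val : ℕ) : ZMod (s ^ i)) = w.1.1 i :=
        coord_le hs w.1 hiN
      have h2 : (((z.1.1 (I.sup id)).val : ℕ) : ZMod (s ^ i)) = z.1.1 i :=
        coord_le hs z.1 hiN
      have : w.1.1 i = z.1.1 i := by rw [← h1, ← h2, hw]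
      rw [this]
      exact (hI i hi).2
    have : w ∈ f ⁻¹' {f z} := by
      rw [← htV, ← hut]
      exact hwu
    exact this
  choose N hN using step
  haveI := compact_domain (s := s) hs
  set U : {z : ZS s // ¬ (s : ZS s) ∣ z} → Set {z : ZS s // ¬ (s : ZS s) ∣ z} :=
    fun z => {w | w.1.1 (N z) = z.1.1 (N z)} with hU
  have hUopen : ∀ z, IsOpen (U z) := by
    intro z
    have : U z = (fun w : {z : ZS s // ¬ (s : ZS s) ∣ z} => w.1.1 (N z)) ⁻¹' {z.1.1 (N z)} := rfl
    rw [this]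
    exact (isOpen_discrete _).preimage (continuous_coord (N z))
  have hcover : (Set.univ : Set {z : ZS s // ¬ (s : ZS s) ∣ z}) ⊆ ⋃ z, U z := by
    intro z _
    exact Set.mem_iUnion.mpr ⟨z, rfl⟩
  obtain ⟨t, ht⟩ := isCompact_univ.elim_finite_subcover U hUopen hcover
  refine ⟨max 1 (t.sup N), le_max_left _ _, fun z w hw => ?_⟩
  obtain ⟨i, hit, hzi⟩ := by
    have := ht (Set.mem_univ z)
    simpa only [Set.mem_iUnion, exists_prop] using this
  have hNi : N i ≤ max 1 (t.sup N) := le_trans (Finset.le_sup hit) (le_max_right _ _)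
  have hwz : w.1.1 (N i) = z.1.1 (N i) := by
    rw [← coord_le hs w.1 hNi, ← coord_le hs z.1 hNi, hw]
  have hzNi : z.1.1 (N i) = i.1.1 (N i) := hzi
  rw [hN i w (by rw [hwz, hzNi]), hN i z hzNi]

end ZSaux

namespace ZSaux

/-- `E x r = 1` iff `r ≡ x  mod s^(log_s x + 1)`. -/
noncomputable def Efn (s x r : ℕ) : ℤ :=
  if (r : ZMod (s ^ (Nat.log s x + 1))) = (x : ZMod (s ^ (Nat.log s x + 1))) then 1 else 0

lemma Efn_self (s x : ℕ) : Efn s x x = 1 := if_pos rfl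

lemma Efn_eq_zero {s : ℕ} (hs : 2 ≤ s) {x r : ℕ} (hrx : r < x) : Efn s x r = 0 := by
  have hx : x < s ^ (Nat.log s x + 1) := Nat.lt_pow_succ_log_self (by omega) x
  have hr : r < s ^ (Nat.log s x + 1) := lt_trans hrx hx
  haveI : NeZero (s ^ (Nat.log s x + 1)) := ⟨pow_ne_zero _ (by omega)⟩
  rw [Efn, if_neg]
  intro h
  have := congrArg ZMod.val h
  rw [ZMod.val_natCast, ZMod.val_natCast, Nat.mod_eq_of_lt hr, Nat.mod_eq_of_lt hx] at this
  omega

noncomputable def cfun (s : ℕ) (F : ℕ → ℤ) (S : Finset ℕ) : ℕ → ℤ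
  | r => F r - ∑ x ∈ (Finset.range r).attach,
      (if x.1 ∈ S then cfun s F S x.1 else 0) * Efn s x.1 r
decreasing_by exact Finset.mem_range.mp x.2

lemma cfun_def (s : ℕ) (F : ℕ → ℤ) (S : Finset ℕ) (r : ℕ) :
    cfun s F S r = F r - ∑ x ∈ Finset.range r,
      (if x ∈ S then cfun s F S x else 0) * Efn s x r := by
  rw [cfun]
  rw [Finset.sum_attach (Finset.range r) (fun x => (if x ∈ S then cfun s F S x else 0) * Efn s x r)]

lemma key_sum {s : ℕ} (hs : 2 ≤ s) (F : ℕ → ℤ) (M : ℕ) (hF1 : F 1 = 0)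
    {r : ℕ} (hr1 : 1 ≤ r) (hrM : r < M) (hrs : ¬ s ∣ r) :
    ∑ x ∈ (Finset.Ico 2 M).filter (fun x => ¬ s ∣ x),
      cfun s F ((Finset.Ico 2 M).filter (fun x => ¬ s ∣ x)) x * Efn s x r = F r := by
  set S := (Finset.Ico 2 M).filter (fun x => ¬ s ∣ x) with hS
  -- terms with x > r vanish
  have hsplit : ∑ x ∈ S, cfun s F S x * Efn s x r
      = ∑ x ∈ S.filter (fun x => x ≤ r), cfun s F S x * Efn s x r := by
    rw [← Finset.sum_filter_add_sum_filter_not S (fun x => x ≤ r)]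
    have : ∑ x ∈ S.filter (fun x => ¬ x ≤ r), cfun s F S x * Efn s x r = 0 := by
      apply Finset.sum_eq_zero
      intro x hx
      have hxr : r < x := by
        have := (Finset.mem_filter.mp hx).2
        omega
      rw [Efn_eq_zero hs hxr, mul_zero]
    rw [this, add_zero]
  rw [hsplit]
  by_cases hr : r = 1
  · subst hr
    have : S.filter (fun x => x ≤ 1) = ∅ := by
      apply Finset.filter_eq_empty_iff.mpr
      intro x hx
      have := Finset.mem_Ico.mp (Finset.mem_filter.mp hx).1
      omega
    rw [this, Finset.sum_empty, hF1]
  · -- r ≥ 2, r ∈ S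
    have hrS : r ∈ S := by
      rw [hS, Finset.mem_filter, Finset.mem_Ico]
      exact ⟨⟨by omega, hrM⟩, hrs⟩
    have hins : S.filter (fun x => x ≤ r) = insert r (S.filter (fun x => x < r)) := by
      ext x
      simp only [Finset.mem_filter, Finset.mem_insert]
      constructor
      · rintro ⟨hxS, hxr⟩
        rcases eq_or_lt_of_le hxr with h | h
        · exact Or.inl h
        · exact Or.inr ⟨hxS, h⟩
      · rintro (h | ⟨hxS, hxr⟩)
        · subst h; exact ⟨hrS, le_refl _⟩
        · exact ⟨hxS, le_of_lt hxr⟩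
    rw [hins, Finset.sum_insert (by simp)]
    have hsum : ∑ x ∈ S.filter (fun x => x < r), cfun s F S x * Efn s x r
        = ∑ x ∈ Finset.range r, (if x ∈ S then cfun s F S x else 0) * Efn s x r := by
      rw [show S.filter (fun x => x < r) = (Finset.range r).filter (fun x => x ∈ S) by
        ext x
        simp only [Finset.mem_filter, Finset.mem_range]
        tauto]
      rw [Finset.sum_filter]
      apply Finset.sum_congr rfl
      intro x _
      by_cases hx : x ∈ S <;> simp [hx]
    rw [hsum, Efn_self, mul_one, cfun_def]
    ring

end ZSaux
/-- Every continuous (equivalently locally constant) ℤ-valued function on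
`ℤ_s^× = {z : s ∤ z}` vanishing at `1` is a finite ℤ-linear combination of the
functions `1_{(x)}`, `x ∈ T = {x ≥ 2 : s ∤ x}`, where `1_{(x)} = 1_{(n(x),x)}`
with `n(x) = Nat.log s x + 1`. -/
theorem stmt6 (s : ℕ) (hs : 2 ≤ s)
    (f : {z : ZS s // ¬ (s : ZS s) ∣ z} → ℤ) (hf : Continuous f)
    (h1 : ¬ (s : ZS s) ∣ 1) (hf1 : f ⟨1, h1⟩ = 0) :
    ∃ g : ℕ →₀ ℤ, (∀ x ∈ g.support, 2 ≤ x ∧ ¬ s ∣ x) ∧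
      ∀ z : {z : ZS s // ¬ (s : ZS s) ∣ z},
        f z = ∑ x ∈ g.support, g x * ZS.indicator s (Nat.log s x + 1) (x : ℤ) z.1 := by
  classical
  haveI : ∀ m : ℕ, NeZero (s ^ m) := fun m => ⟨pow_ne_zero _ (by omega)⟩
  obtain ⟨N, hN1, hNf⟩ := ZSaux.exists_level hs f hf
  set M := s ^ N with hM
  set S := (Finset.Ico 2 M).filter (fun x => ¬ s ∣ x) with hS
  set F : ℕ → ℤ := fun x => if h : ¬ (s : ZS s) ∣ (x : ZS s) then f ⟨(x : ZS s), h⟩ else 0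
    with hF
  have hF1 : F 1 = 0 := by
    have hc1 : ¬ (s : ZS s) ∣ ((1 : ℕ) : ZS s) := by rw [Nat.cast_one]; exact h1
    simp only [hF]
    rw [dif_pos hc1]
    have he : (⟨((1 : ℕ) : ZS s), hc1⟩ : {z : ZS s // ¬ (s : ZS s) ∣ z}) = ⟨1, h1⟩ :=
      Subtype.ext Nat.cast_one
    rw [he, hf1]
  set c := ZSaux.cfun s F S with hc
  set g : ℕ →₀ ℤ := Finsupp.onFinset S (fun x => if x ∈ S then c x else 0)
    (fun a ha => by by_contra h; simp [h] at ha) with hg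
  refine ⟨g, ?_, ?_⟩
  · intro x hx
    have hxS : x ∈ S := Finsupp.support_onFinset_subset hx
    rw [hS, Finset.mem_filter, Finset.mem_Ico] at hxS
    exact ⟨hxS.1.1, hxS.2⟩
  · intro z
    set r := (z.1.1 N).val with hr
    have hrM : r < M := ZMod.val_lt _
    have hz1 : z.1.1 1 ≠ 0 := fun h => z.2 ((ZSaux.dvd_iff hs z.1).mpr h)
    have hcoord : ∀ {n : ℕ}, n ≤ N → ((r : ℕ) : ZMod (s ^ n)) = z.1.1 n :=
      fun hn => ZSaux.coord_le hs z.1 hn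
    have hrs : ¬ s ∣ r := by
      intro hdvd
      apply hz1
      rw [← hcoord hN1]
      exact (ZMod.natCast_eq_zero_iff r (s ^ 1)).mpr (by rwa [pow_one])
    have hr1 : 1 ≤ r := by
      rcases Nat.eq_zero_or_pos r with h | h
      · exact absurd (h ▸ dvd_zero s) hrs
      · exact h
    have hrZS : ¬ (s : ZS s) ∣ ((r : ℕ) : ZS s) := by
      rw [ZSaux.dvd_iff hs]
      show ((r : ZS s) : ∀ i, ZMod (s ^ i)) 1 ≠ 0
      rw [ZSaux.coe_natCast r 1, hcoord hN1]
      exact hz1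
    have hfzFr : F r = f z := by
      simp only [hF]
      rw [dif_pos hrZS]
      apply hNf z ⟨((r : ℕ) : ZS s), hrZS⟩
      show ((r : ZS s) : ∀ i, ZMod (s ^ i)) N = z.1.1 N
      rw [ZSaux.coe_natCast r N, hr, ZMod.natCast_val, ZMod.cast_id]
    have hsum : ∑ x ∈ g.support, g x * ZS.indicator s (Nat.log s x + 1) (x : ℤ) z.1
        = ∑ x ∈ S, c x * ZSaux.Efn s x r := by
      rw [Finset.sum_subset (Finsupp.support_onFinset_subset (f := fun x => if x ∈ S then c x else 0))
        (fun x hxS hxsupp => by rw [Finsupp.notMem_support_iff.mp hxsupp, zero_mul])]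
      apply Finset.sum_congr rfl
      intro x hxS
      have hgx : g x = c x := by
        rw [hg, Finsupp.onFinset_apply, if_pos hxS]
      rw [hgx]
      congr 1
      have hx2 : 2 ≤ x ∧ x < M := by
        have := Finset.mem_Ico.mp (Finset.mem_filter.mp hxS).1
        exact this
      have hlog : Nat.log s x + 1 ≤ N := by
        have := Nat.log_lt_of_lt_pow (x := N) (by omega : x ≠ 0) (hM ▸ hx2.2)
        omega
      rw [ZSaux.indicator_eq hs, ZSaux.Efn]
      refine if_congr ?_ rfl rfl
      rw [← hcoord hlog, Int.cast_natCast]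
    rw [hsum, ← hfzFr, hc, hS]
    exact (ZSaux.key_sum hs F M hF1 hr1 hrM hrs).symm
end

section
/- Let s ≥ 2 and z ∈ T = {x ≥ 2 : s ∤ x}. For every x ∈ T, the evaluation satisfies δ_z(1_{(x)}) = ∑_{i≥0, γ^i(z)∈T} e_{(γ^i(z))}(1_{(x)}), where e_{(y)}(1_{(x)}) = 1 if y = x and 0 otherwise; equivalently, 1_{(x)}(z) = 1 if and only if x = γ^i(z) for some i ≥ 0 with γ^i(z) ∈ T. -/
open scoped Classical

/-- For `x ≥ 2` with `s^(n(x)-1) ≤ x < s^(n(x))` (so `n(x) - 1 = Nat.log s x`),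
`γ(x) = x mod s^(n(x)-1)`. -/
def gam (s x : ℕ) : ℕ := x % s ^ (Nat.log s x)


/-- For `x ∈ T`, `n(x) = Nat.log s x + 1` and `1_{(x)}(z) = 1` iff `s^(n(x)) ∣ z - x`. -/
noncomputable def indZ (s x : ℕ) (z : ℕ) : ℤ :=
  if ((s : ℤ)) ^ (Nat.log s x + 1) ∣ ((z : ℤ) - (x : ℤ)) then 1 else 0

lemma iterate_gam_eq_mod (s : ℕ) (hs : 2 ≤ s) (z : ℕ) (i : ℕ) :
    ∃ m, (gam s)^[i] z = z % s ^ m := by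
  induction i with
  | zero => exact ⟨Nat.log s z + 1, (Nat.mod_eq_of_lt (Nat.lt_pow_succ_log_self (by omega) z)).symm⟩
  | succ i ih =>
    obtain ⟨m, hm⟩ := ih
    rw [Function.iterate_succ_apply', hm]
    by_cases h0 : z % s ^ m = 0
    · exact ⟨0, by simp [gam, h0, Nat.mod_one]⟩
    · refine ⟨Nat.log s (z % s ^ m), ?_⟩
      have h1 : s ^ Nat.log s (z % s ^ m) ≤ z % s ^ m := Nat.pow_log_le_self s h0
      have h2 : z % s ^ m < s ^ m := Nat.mod_lt _ (pow_pos (by omega) m)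
      have hlt : Nat.log s (z % s ^ m) < m :=
        (Nat.pow_lt_pow_iff_right (by omega)).mp (h1.trans_lt h2)
      rw [gam, Nat.mod_mod_of_dvd _ (pow_dvd_pow s hlt.le)]

lemma key_lemma (s : ℕ) (hs : 2 ≤ s) :
    ∀ z, ¬ s ∣ z → ∀ x, 2 ≤ x → x = z % s ^ (Nat.log s x + 1) →
      ∃ i, x = (gam s)^[i] z := by
  intro z
  induction z using Nat.strong_induction_on with
  | _ z ih =>
    intro hsz x hx2 hx
    set n := Nat.log s x + 1 with hn
    by_cases hlt : z < s ^ n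
    · exact ⟨0, by simpa [Nat.mod_eq_of_lt hlt] using hx⟩
    · push_neg at hlt
      have hsn : 2 ≤ s ^ n := le_trans hs (Nat.le_self_pow (by omega) s)
      have hz0 : z ≠ 0 := by omega
      have hnlog : n ≤ Nat.log s z := (Nat.le_log_iff_pow_le (by omega) hz0).mpr hlt
      have hlog1 : 1 ≤ Nat.log s z := le_trans (by omega) hnlog
      have hpos : 0 < s ^ Nat.log s z := pow_pos (by omega) _
      have hple : s ^ Nat.log s z ≤ z := Nat.pow_log_le_self s hz0
      have hglt : gam s z < z := lt_of_lt_of_le (Nat.mod_lt _ hpos) hple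
      have hxg : x = gam s z % s ^ n := by
        rw [hx, gam, Nat.mod_mod_of_dvd _ (pow_dvd_pow s hnlog)]
      have hg2 : 2 ≤ gam s z := le_trans hx2 (hxg ▸ Nat.mod_le _ _)
      have hgs : ¬ s ∣ gam s z := by
        intro hd
        exact hsz ((Nat.dvd_mod_iff (dvd_pow_self s (by omega))).mp hd)
      obtain ⟨i, hi⟩ := ih (gam s z) hglt hgs x hx2 hxg
      exact ⟨i + 1, by rw [Function.iterate_succ_apply]; exact hi⟩

/-- For `z, x ∈ T`: `1_{(x)}(z) = 1` iff `x = γ^i(z)` for some `i ≥ 0` with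
`γ^i(z) ∈ T`; i.e. `δ_z = ∑_i e_{(γ^i(z))}` on the generators `1_{(x)}`. -/
theorem stmt11 (s z x : ℕ) (hs : 2 ≤ s) (hz2 : 2 ≤ z) (hsz : ¬ s ∣ z)
    (hx2 : 2 ≤ x) (hsx : ¬ s ∣ x) :
    indZ s x z = 1 ↔
      ∃ i : ℕ, (2 ≤ (gam s)^[i] z ∧ ¬ s ∣ (gam s)^[i] z) ∧ x = (gam s)^[i] z := by
  set n := Nat.log s x + 1 with hn
  constructor
  · intro h
    have hd : (s : ℤ) ^ n ∣ ((z : ℤ) - (x : ℤ)) := by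
      by_contra hc
      simp [indZ, hc] at h
      exact hc h
    have h1 : (x : ℤ) % (s : ℤ) ^ n = (z : ℤ) % (s : ℤ) ^ n :=
      Int.modEq_iff_dvd.mpr hd
    have hxlt : x < s ^ n := Nat.lt_pow_succ_log_self (by omega) x
    have hxz : x = z % s ^ n := by
      have h2 : ((x % s ^ n : ℕ) : ℤ) = ((z % s ^ n : ℕ) : ℤ) := by push_cast; exact h1
      have h3 : x % s ^ n = z % s ^ n := by exact_mod_cast h2
      rwa [Nat.mod_eq_of_lt hxlt] at h3
    obtain ⟨i, hi⟩ := key_lemma s hs z hsz x hx2 hxz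
    exact ⟨i, ⟨hi ▸ hx2, hi ▸ hsx⟩, hi⟩
  · rintro ⟨i, ⟨hg2, hgs⟩, hxi⟩
    obtain ⟨m, hm⟩ := iterate_gam_eq_mod s hs z i
    rw [hxi] at hx2 ⊢
    rw [hm] at hx2 ⊢
    have hx0 : z % s ^ m ≠ 0 := by omega
    have h1 : s ^ Nat.log s (z % s ^ m) ≤ z % s ^ m := Nat.pow_log_le_self s hx0
    have h2 : z % s ^ m < s ^ m := Nat.mod_lt _ (pow_pos (by omega) m)
    have hlt : Nat.log s (z % s ^ m) < m :=
      (Nat.pow_lt_pow_iff_right (by omega)).mp (h1.trans_lt h2)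
    have hdm : (s : ℤ) ^ m ∣ ((z : ℤ) - ((z % s ^ m : ℕ) : ℤ)) := by
      refine ⟨((z / s ^ m : ℕ) : ℤ), ?_⟩
      have h3 := Nat.div_add_mod z (s ^ m)
      have h4 : ((s ^ m * (z / s ^ m) + z % s ^ m : ℕ) : ℤ) = (z : ℤ) := by exact_mod_cast h3
      push_cast at h4 ⊢
      linarith
    have hd : (s : ℤ) ^ (Nat.log s (z % s ^ m) + 1) ∣ ((z : ℤ) - ((z % s ^ m : ℕ) : ℤ)) :=
      dvd_trans (pow_dvd_pow (s : ℤ) hlt) hdm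
    rw [indZ, if_pos hd]
end

section
/- Let s ≥ 2 and z ∈ T = {x ≥ 2 : s ∤ x}. Then for all x ∈ T: e_{(z)}(1_{(x)}) = δ_z(1_{(x)}) − δ_{γ(z)}(1_{(x)}), i.e., [x = z] = 1_{(x)}(z) − 1_{(x)}(γ(z)), where 1_{(x)}(γ(z)) is interpreted as 0 when γ(z) ∉ T (indeed 1_{(x)}(w) = 0 for any w ∉ T when x ∈ T). -/
open scoped Classical

lemma indZ_zero_of_small (s x w : ℕ) (hw : w < s ^ (Nat.log s x + 1))
    (hx : x < s ^ (Nat.log s x + 1)) (hne : w ≠ x) : indZ s x w = 0 := by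
  unfold indZ
  rw [if_neg]
  intro hdvd
  have h0 : ((w : ℤ) - x) = 0 := by
    refine Int.eq_zero_of_abs_lt_dvd hdvd ?_
    have h1 : ((w : ℤ)) < (s : ℤ) ^ (Nat.log s x + 1) := by exact_mod_cast hw
    have h2 : ((x : ℤ)) < (s : ℤ) ^ (Nat.log s x + 1) := by exact_mod_cast hx
    rw [abs_sub_lt_iff]
    constructor <;> [skip; skip] <;> nlinarith [Int.natCast_nonneg w, Int.natCast_nonneg x]
  have : (w : ℤ) = x := by linarith
  exact hne (by exact_mod_cast this)

/-- For `z, x ∈ T`: `e_{(z)}(1_{(x)}) = δ_z(1_{(x)}) − δ_{γ(z)}(1_{(x)})`, i.e.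
`[x = z] = 1_{(x)}(z) − 1_{(x)}(γ(z))`; moreover `1_{(x)}(w) = 0` for `w ∉ T`. -/
theorem stmt12 (s z x : ℕ) (hs : 2 ≤ s) (hz2 : 2 ≤ z) (hsz : ¬ s ∣ z)
    (hx2 : 2 ≤ x) (hsx : ¬ s ∣ x) :
    ((if x = z then (1 : ℤ) else 0) = indZ s x z - indZ s x (gam s z)) ∧
    (∀ w : ℕ, ¬ (2 ≤ w ∧ ¬ s ∣ w) → indZ s x w = 0) := by
  have hs1 : 1 < s := hs
  set L := Nat.log s x with hLdef
  have hxlow : s ^ L ≤ x := Nat.pow_log_le_self s (by omega)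
  have hxhigh : x < s ^ (L + 1) := Nat.lt_pow_succ_log_self hs1 x
  have hzlow : s ^ Nat.log s z ≤ z := Nat.pow_log_le_self s (by omega)
  have hzhigh : z < s ^ (Nat.log s z + 1) := Nat.lt_pow_succ_log_self hs1 z
  have hg : gam s z = z % s ^ (Nat.log s z) := rfl
  have hgsmall : gam s z < s ^ (Nat.log s z) := by
    rw [hg]; exact Nat.mod_lt _ (Nat.pow_pos (n := Nat.log s z) (by omega))
  -- z - gam z is divisible by s ^ (log s z), over ℤ
  have hgdvd : ((s : ℤ)) ^ (Nat.log s z) ∣ ((z : ℤ) - (gam s z : ℤ)) := by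
    rw [hg]
    have := Nat.div_add_mod z (s ^ (Nat.log s z))
    refine ⟨(z / s ^ (Nat.log s z) : ℕ), ?_⟩
    push_cast
    nlinarith [this]
  constructor
  · by_cases hxz : x = z
    · subst hxz
      rw [if_pos rfl]
      have h1 : indZ s x x = 1 := by
        unfold indZ; rw [if_pos]; simp
      have h2 : indZ s x (gam s x) = 0 := by
        apply indZ_zero_of_small s x _ _ hxhigh
        · omega
        · calc gam s x < s ^ L := hgsmall
            _ ≤ s ^ (L + 1) := Nat.pow_le_pow_right (by omega) (by omega)
      rw [h1, h2]; ring
    · rw [if_neg hxz]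
      by_cases hdvd : ((s : ℤ)) ^ (L + 1) ∣ ((z : ℤ) - (x : ℤ))
      · -- z ≥ x + s^(L+1), so log s z ≥ L+1 and gam z ≡ x
        have h1 : indZ s x z = 1 := by unfold indZ; rw [if_pos hdvd]
        obtain ⟨c, hc⟩ := hdvd
        have hp : (0 : ℤ) < (s : ℤ) ^ (L + 1) := by positivity
        have hc1 : 1 ≤ c := by
          rcases lt_trichotomy c 0 with h | h | h
          · exfalso
            have : (z : ℤ) - x ≤ -(s : ℤ) ^ (L + 1) := by
              calc (z : ℤ) - x = (s : ℤ) ^ (L+1) * c := hc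
                _ ≤ (s : ℤ) ^ (L+1) * (-1) := by
                    apply mul_le_mul_of_nonneg_left (by omega) (le_of_lt hp)
                _ = -(s : ℤ) ^ (L + 1) := by ring
            have hzpos : (0 : ℤ) ≤ z := Int.natCast_nonneg z
            have hxb : (x : ℤ) < (s : ℤ) ^ (L + 1) := by exact_mod_cast hxhigh
            linarith
          · exfalso
            rw [h, mul_zero] at hc
            exact hxz (by exact_mod_cast (by linarith : (x : ℤ) = z))
          · omega
        have hzbig : s ^ (L + 1) ≤ z := by
          have : (s : ℤ) ^ (L + 1) ≤ (z : ℤ) := by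
            have hxb : (0 : ℤ) ≤ x := Int.natCast_nonneg x
            nlinarith
          exact_mod_cast this
        have hlog : L + 1 ≤ Nat.log s z :=
          (Nat.le_log_iff_pow_le hs1 (by omega)).mpr hzbig
        have hdvd2 : ((s : ℤ)) ^ (L + 1) ∣ ((z : ℤ) - (gam s z : ℤ)) :=
          dvd_trans (pow_dvd_pow _ hlog) hgdvd
        have h2 : indZ s x (gam s z) = 1 := by
          unfold indZ
          rw [if_pos]
          have : ((gam s z : ℤ) - x) = ((z : ℤ) - x) - ((z : ℤ) - gam s z) := by ring
          rw [this]
          exact dvd_sub ⟨c, hc⟩ hdvd2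
        rw [h1, h2]; ring
      · have h1 : indZ s x z = 0 := by unfold indZ; rw [if_neg hdvd]
        have h2 : indZ s x (gam s z) = 0 := by
          by_cases hcmp : L + 1 ≤ Nat.log s z
          · unfold indZ
            rw [if_neg]
            intro hd
            apply hdvd
            have hdvd2 : ((s : ℤ)) ^ (L + 1) ∣ ((z : ℤ) - (gam s z : ℤ)) :=
              dvd_trans (pow_dvd_pow _ hcmp) hgdvd
            have : ((z : ℤ) - x) = ((z : ℤ) - gam s z) + ((gam s z : ℤ) - x) := by ring
            rw [this]
            exact dvd_add hdvd2 hd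
          · -- log s z ≤ L, so gam z < s^L ≤ x
            have hle : Nat.log s z ≤ L := by omega
            have hlt : gam s z < x := by
              calc gam s z < s ^ (Nat.log s z) := hgsmall
                _ ≤ s ^ L := Nat.pow_le_pow_right (by omega) hle
                _ ≤ x := hxlow
            exact indZ_zero_of_small s x _ (by rw [← hLdef]; omega) hxhigh (by omega)
        rw [h1, h2]; ring
  · intro w hw
    push_neg at hw
    by_cases hw2 : 2 ≤ w
    · -- then s ∣ w
      have hsw : s ∣ w := hw hw2
      unfold indZ
      rw [if_neg]
      intro hd
      apply hsx
      have hs' : (s : ℤ) ∣ ((w : ℤ) - x) := dvd_trans (dvd_pow_self _ (by omega)) hd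
      have hsw' : (s : ℤ) ∣ (w : ℤ) := by exact_mod_cast hsw
      have : (s : ℤ) ∣ (x : ℤ) := by
        have : ((x : ℤ)) = w - (w - x) := by ring
        rw [this]; exact dvd_sub hsw' hs'
      exact_mod_cast this
    · -- w ≤ 1
      have hb : s ^ (L + 1) ≥ s := Nat.le_self_pow (by omega) s
      exact indZ_zero_of_small s x w (by rw [← hLdef]; omega) hxhigh (by omega)
end
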